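/- Let p, K, L be positive integers, let a_k, b_k ∈ ℝ and γ_k ∈ ℝ^p with ‖γ_k‖₂ = 1 for k = 1,…,K, and let c_l, d_l ∈ ℝ and γ̃_l ∈ ℝ^p with ‖γ̃_l‖₂ = 1 for l = 1,…,L. Suppose that for every symmetric matrix M ∈ ℝ^{p×p}, Σ_{k=1}^{K} (a_k (γ_kᵀMγ_k)² + b_k (γ_kᵀMγ_k)) = Σ_{l=1}^{L} (c_l (γ̃_lᵀMγ̃_l)² + d_l (γ̃_lᵀMγ̃_l)). Then for all indices j, j' ∈ {1,…,p}, Σ_{k=1}^{K} a_k γ_{k,j} γ_{k,j'} γ_kγ_kᵀ = Σ_{l=1}^{L} c_l γ̃_{l,j} γ̃_{l,j'} γ̃_lγ̃_lᵀ, where γ_{k,j} denotes the j-th coordinate of γ_k. -/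

import Mathlib

open Matrix

private lemma expand_aux {n : ℕ} (A B x y : Fin n → ℝ) (u v : ℝ) :
    ∑ k, (A k * (u * x k + v * y k) ^ 2 + B k * (u * x k + v * y k)) =
      u ^ 2 * (∑ k, A k * x k ^ 2) + (2 * u * v) * (∑ k, A k * (x k * y k)) +
      v ^ 2 * (∑ k, A k * y k ^ 2) + u * (∑ k, B k * x k) + v * (∑ k, B k * y k) := by
  rw [Finset.mul_sum, Finset.mul_sum, Finset.mul_sum, Finset.mul_sum, Finset.mul_sum,
    ← Finset.sum_add_distrib, ← Finset.sum_add_distrib, ← Finset.sum_add_distrib,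
    ← Finset.sum_add_distrib]
  exact Finset.sum_congr rfl fun k _ => by ring

private lemma dot_aux {p : ℕ} (v : Fin p → ℝ) (j j' : Fin p) :
    v ⬝ᵥ (Matrix.single j j' (1:ℝ) + Matrix.single j' j 1).mulVec v = 2 * (v j * v j') := by
  simp only [Matrix.add_mulVec, dotProduct_add, Matrix.single_mulVec, dotProduct,
    Function.update_apply, Pi.zero_apply, Pi.add_apply, one_mul, mul_ite, mul_zero, mul_add,
    Finset.sum_add_distrib, Finset.sum_ite_eq', Finset.mem_univ, if_true]
  ring

private lemma symm_aux {p : ℕ} (j j' : Fin p) :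
    (Matrix.single j j' (1:ℝ) + Matrix.single j' j 1).IsSymm := by
  ext x y
  simp only [Matrix.IsSymm, Matrix.transpose_apply, Matrix.add_apply, Matrix.single,
    Matrix.of_apply]
  rw [add_comm]
  congr 1 <;> simp [and_comm]

/-- The family of matrix identities, one for each entry pair `(j, j')`, obtained in the
quadratic case of the identifiability proof by differentiating the additive-index
identity with respect to the symmetric matrix argument and evaluating at elementary
symmetric matrices. -/
theorem quadratic_case_entrywise_matrix_identities
    {p K L : ℕ} (hp : 0 < p) (hK : 0 < K) (hL : 0 < L)
    (a b : Fin K → ℝ) (c d : Fin L → ℝ)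
    (γ : Fin K → Fin p → ℝ) (γ' : Fin L → Fin p → ℝ)
    (hγu : ∀ k, ∑ i, γ k i ^ 2 = 1) (hγ'u : ∀ l, ∑ i, γ' l i ^ 2 = 1)
    (heq : ∀ M : Matrix (Fin p) (Fin p) ℝ, M.IsSymm →
      ∑ k, (a k * (γ k ⬝ᵥ M.mulVec (γ k)) ^ 2 + b k * (γ k ⬝ᵥ M.mulVec (γ k))) =
      ∑ l, (c l * (γ' l ⬝ᵥ M.mulVec (γ' l)) ^ 2 + d l * (γ' l ⬝ᵥ M.mulVec (γ' l)))) :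
    ∀ j j' : Fin p,
      ∑ k, (a k * γ k j * γ k j') • vecMulVec (γ k) (γ k) =
      ∑ l, (c l * γ' l j * γ' l j') • vecMulVec (γ' l) (γ' l) := by
  -- Key step: a polarization/cross-term identity for all pairs of symmetric matrices.
  have cross : ∀ S1 S2 : Matrix (Fin p) (Fin p) ℝ, S1.IsSymm → S2.IsSymm →
      ∑ k, a k * ((γ k ⬝ᵥ S1.mulVec (γ k)) * (γ k ⬝ᵥ S2.mulVec (γ k))) =
      ∑ l, c l * ((γ' l ⬝ᵥ S1.mulVec (γ' l)) * (γ' l ⬝ᵥ S2.mulVec (γ' l))) := by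
    intro S1 S2 h1 h2
    have hQ : ∀ (v : Fin p → ℝ) (u u' : ℝ),
        v ⬝ᵥ (u • S1 + u' • S2).mulVec v =
          u * (v ⬝ᵥ S1.mulVec v) + u' * (v ⬝ᵥ S2.mulVec v) := by
      intro v u u'
      simp [Matrix.add_mulVec, Matrix.smul_mulVec, dotProduct_add, dotProduct_smul,
        smul_eq_mul]
    have hS : ∀ u u' : ℝ, (u • S1 + u' • S2).IsSymm := by
      intro u u'
      exact Matrix.IsSymm.add (h1.smul u) (h2.smul u')
    have L1 := heq _ (hS 1 1)
    have L2 := heq _ (hS 1 (-1))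
    have L3 := heq _ (hS 2 1)
    have L4 := heq _ (hS 2 (-1))
    simp only [hQ] at L1 L2 L3 L4
    rw [expand_aux a b _ _ 1 1, expand_aux c d _ _ 1 1] at L1
    rw [expand_aux a b _ _ 1 (-1), expand_aux c d _ _ 1 (-1)] at L2
    rw [expand_aux a b _ _ 2 1, expand_aux c d _ _ 2 1] at L3
    rw [expand_aux a b _ _ 2 (-1), expand_aux c d _ _ 2 (-1)] at L4
    linarith [L1, L2, L3, L4]
  intro j j'
  ext i i'
  simp only [Matrix.sum_apply, Matrix.smul_apply, Matrix.vecMulVec_apply, smul_eq_mul]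
  have h := cross (Matrix.single j j' 1 + Matrix.single j' j 1)
    (Matrix.single i i' 1 + Matrix.single i' i 1) (symm_aux j j') (symm_aux i i')
  simp only [dot_aux] at h
  have hl : ∑ k, a k * (2 * (γ k j * γ k j') * (2 * (γ k i * γ k i'))) =
      4 * ∑ k, a k * γ k j * γ k j' * (γ k i * γ k i') := by
    rw [Finset.mul_sum]; exact Finset.sum_congr rfl fun k _ => by ring
  have hr : ∑ l, c l * (2 * (γ' l j * γ' l j') * (2 * (γ' l i * γ' l i'))) =
      4 * ∑ l, c l * γ' l j * γ' l j' * (γ' l i * γ' l i') := by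
    rw [Finset.mul_sum]; exact Finset.sum_congr rfl fun l _ => by ring
  linarith [h, hl, hr]
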